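/- Let K be a field of characteristic p > 0, f ∈ K[[x]] with f(0) = 0 and Milnor number μ < ∞, and let t = (t_1, ..., t_μ) ∈ K^μ with t_i ≠ 0 for some i not divisible by p. Let n be the smallest such i. If n ≤ μ(f) and n − 1 < μ, then μ(f + Σ t_i x^i) = n − 1 < μ. In particular, perturbing f by a monomial t·x^n with p ∤ n and n ≤ μ strictly decreases the Milnor number to n − 1. -/

import Mathlib

open PowerSeries

noncomputable def milnor (K : Type*) [Field K] (f : PowerSeries K) : ℕ :=
  Module.finrank K (PowerSeries K ⧸ Ideal.span {f.derivativeFun})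

def MilnorFinite (K : Type*) [Field K] (f : PowerSeries K) : Prop :=
  Module.Finite K (PowerSeries K ⧸ Ideal.span {f.derivativeFun})

def RightEquiv (K : Type*) [Field K] (f g : PowerSeries K) : Prop :=
  ∃ Φ : PowerSeries K ≃ₐ[K] PowerSeries K, Φ f = g

section Aux

variable (K : Type*) [Field K]

lemma aux_span_eq_span_X_pow (g : PowerSeries K) (d : ℕ)
    (h0 : ∀ i < d, coeff i g = 0) (hd : coeff d g ≠ 0) :
    Ideal.span {g} = Ideal.span {(X : PowerSeries K) ^ d} := by
  obtain ⟨u, hu⟩ : (X : PowerSeries K) ^ d ∣ g := X_pow_dvd_iff.2 h0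
  have hcu : constantCoeff u ≠ 0 := by
    intro h
    apply hd
    have : coeff (0 + d) ((X : PowerSeries K) ^ d * u) = coeff 0 u :=
      coeff_X_pow_mul u d 0
    rw [hu]
    simpa [coeff_zero_eq_constantCoeff, h] using this
  have hunit : IsUnit u := isUnit_iff_constantCoeff.2 (isUnit_iff_ne_zero.2 hcu)
  rw [hu, Ideal.span_singleton_mul_right_unit hunit]

lemma aux_finrank_quot_X_pow (d : ℕ) :
    Module.finrank K (PowerSeries K ⧸ Ideal.span {(X : PowerSeries K) ^ d}) = d := by
  let L : PowerSeries K →ₗ[K] (Fin d → K) :=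
    { toFun := fun h i => coeff i h
      map_add' := by intros; ext i; simp
      map_smul' := by intros; ext i; simp }
  have hsurj : Function.Surjective L := by
    intro v
    refine ⟨PowerSeries.mk (fun i => if h : i < d then v ⟨i, h⟩ else 0), ?_⟩
    ext i
    simp [L, coeff_mk, i.isLt]
  have hker : ((Ideal.span {(X : PowerSeries K) ^ d}).restrictScalars K)
      = LinearMap.ker L := by
    ext h
    simp only [Submodule.restrictScalars_mem, Ideal.mem_span_singleton,
      X_pow_dvd_iff, LinearMap.mem_ker]
    constructor
    · intro hh; ext i; simpa [L] using hh i i.isLt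
    · intro hh i hi
      have := congrFun hh ⟨i, hi⟩
      simpa [L] using this
  have e : (PowerSeries K ⧸ Ideal.span {(X : PowerSeries K) ^ d}) ≃ₗ[K] (Fin d → K) :=
    (Submodule.Quotient.restrictScalarsEquiv K _).symm.trans
      ((Submodule.quotEquivOfEq _ _ hker).trans (L.quotKerEquivOfSurjective hsurj))
  rw [e.finrank_eq]
  simp

lemma aux_finrank_quot (g : PowerSeries K) (d : ℕ)
    (h0 : ∀ i < d, coeff i g = 0) (hd : coeff d g ≠ 0) :
    Module.finrank K (PowerSeries K ⧸ Ideal.span {g}) = d := by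
  rw [aux_span_eq_span_X_pow K g d h0 hd, aux_finrank_quot_X_pow]

lemma aux_ne_zero_of_finite {g : PowerSeries K}
    (h : Module.Finite K (PowerSeries K ⧸ Ideal.span {g})) : g ≠ 0 := by
  rintro rfl
  have hbot : Ideal.span {(0 : PowerSeries K)} = ⊥ := by simp
  have e : (PowerSeries K ⧸ Ideal.span {(0 : PowerSeries K)}) ≃ₗ[PowerSeries K]
      PowerSeries K := Submodule.quotEquivOfEqBot _ hbot
  have e' := e.restrictScalars K
  have h1 : Module.Finite K (PowerSeries K) := Module.Finite.equiv e'
  let L2 : Polynomial K →ₗ[K] PowerSeries K :=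
    { toFun := fun q => (q : PowerSeries K)
      map_add' := fun a b => by push_cast; ring
      map_smul' := fun r a => by
        ext i
        simp [Polynomial.coeff_coe] }
  have hinj : Function.Injective L2 := fun a b hab => Polynomial.coe_injective K hab
  have h2 : Module.Finite K (Polynomial K) := Module.Finite.of_injective L2 hinj
  exact Polynomial.not_finite h2

lemma aux_coeff_derivativeFun (f : PowerSeries K) (n : ℕ) :
    coeff n f.derivativeFun = coeff (n + 1) f * (n + 1) :=
  coeff_derivative f n

end Aux

theorem stmt_18 (K : Type*) [Field K] (p : ℕ) (hp : p.Prime) [CharP K p]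
    (f : PowerSeries K) (hf0 : constantCoeff f = 0) (hfin : MilnorFinite K f)
    (μ : ℕ) (hμ : μ = milnor K f) (t : Fin μ → K)
    (n : ℕ)
    (hne : {i : ℕ | ∃ j : Fin μ, (j : ℕ) + 1 = i ∧ t j ≠ 0 ∧ ¬ p ∣ i}.Nonempty)
    (hn : n = sInf {i : ℕ | ∃ j : Fin μ, (j : ℕ) + 1 = i ∧ t j ≠ 0 ∧ ¬ p ∣ i})
    (hnμ : n ≤ μ) (hlt : n - 1 < μ) :
    milnor K (f + ∑ i, C (t i) * X ^ ((i : ℕ) + 1)) = n - 1 ∧ n - 1 < μ := by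
  classical
  refine ⟨?_, hlt⟩
  -- first: f.derivativeFun has all coefficients below μ equal to zero
  have hgne : f.derivativeFun ≠ 0 := aux_ne_zero_of_finite K hfin
  have hex : ∃ i, coeff i f.derivativeFun ≠ 0 := by
    by_contra hc
    push_neg at hc
    exact hgne (PowerSeries.ext fun i => by simpa using hc i)
  set d := Nat.find hex with hdd
  have hdne : coeff d f.derivativeFun ≠ 0 := Nat.find_spec hex
  have hdlow : ∀ i < d, coeff i f.derivativeFun = 0 := by
    intro i hi
    by_contra hc
    exact absurd (Nat.find_le hc) (not_le.2 hi)
  have hμd : μ = d := by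
    rw [hμ, milnor, aux_finrank_quot K f.derivativeFun d hdlow hdne]
  have hflow : ∀ i < μ, coeff i f.derivativeFun = 0 := fun i hi => hdlow i (hμd ▸ hi)
  -- n is in the set
  have hnmem : n ∈ {i : ℕ | ∃ j : Fin μ, (j : ℕ) + 1 = i ∧ t j ≠ 0 ∧ ¬ p ∣ i} := by
    rw [hn]; exact Nat.sInf_mem hne
  obtain ⟨j, hjn, htj, hpn⟩ := hnmem
  have hn1 : 1 ≤ n := by omega
  -- coefficient of the sum
  set S : PowerSeries K := ∑ i : Fin μ, C (t i) * X ^ ((i : ℕ) + 1) with hS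
  have hcoeffS : ∀ j' : Fin μ, coeff ((j' : ℕ) + 1) S = t j' := by
    intro j'
    rw [hS, map_sum]
    rw [Finset.sum_eq_single j']
    · simp [coeff_C_mul, coeff_X_pow]
    · intro b _ hb
      have : ((j' : ℕ) + 1) ≠ ((b : ℕ) + 1) := by
        simp only [ne_eq, add_left_inj]
        exact fun h => hb (Fin.ext h.symm)
      simp [coeff_C_mul, coeff_X_pow, this, Fin.val_inj, hb.symm]
    · simp
  -- coefficients of derivative of f + S
  have hD : (f + S).derivativeFun = f.derivativeFun + S.derivativeFun :=
    derivativeFun_add f S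
  have hlowD : ∀ i < n - 1, coeff i ((f + S).derivativeFun) = 0 := by
    intro i hi
    have hiμ : i < μ := lt_trans hi hlt
    have hi1 : i + 1 < n := by omega
    have hi1μ : i < μ := hiμ
    rw [hD, map_add, hflow i hiμ, zero_add, aux_coeff_derivativeFun K]
    have : coeff (i + 1) S = t ⟨i, hiμ⟩ := hcoeffS ⟨i, hiμ⟩
    rw [this]
    by_cases hpi : p ∣ (i + 1)
    · have : ((i + 1 : ℕ) : K) = 0 := (CharP.cast_eq_zero_iff K p (i + 1)).2 hpi
      push_cast
      push_cast at this
      rw [this, mul_zero]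
    · by_cases hti : t ⟨i, hiμ⟩ = 0
      · rw [hti, zero_mul]
      · exfalso
        have hmem : (i + 1) ∈ {i : ℕ | ∃ j : Fin μ, (j : ℕ) + 1 = i ∧ t j ≠ 0 ∧ ¬ p ∣ i} :=
          ⟨⟨i, hiμ⟩, rfl, hti, hpi⟩
        have := Nat.sInf_le hmem
        omega
  have hnK : ((n : ℕ) : K) ≠ 0 := fun h => hpn ((CharP.cast_eq_zero_iff K p n).1 h)
  have htopD : coeff (n - 1) ((f + S).derivativeFun) ≠ 0 := by
    have hsub : n - 1 + 1 = n := by omega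
    have hcast : ((n - 1 : ℕ) : K) + 1 = ((n : ℕ) : K) := by
      rw [← Nat.cast_add_one, hsub]
    rw [hD, map_add, aux_coeff_derivativeFun K, aux_coeff_derivativeFun K, hsub, hcast]
    -- coeff n f = 0 since coeff (n-1) f' = 0 and (n : K) ≠ 0
    have h1 : coeff (n - 1) f.derivativeFun = 0 := hflow (n - 1) hlt
    rw [aux_coeff_derivativeFun K, hsub, hcast] at h1
    have hfn : coeff n f = 0 := by
      rcases mul_eq_zero.1 h1 with h | h
      · exact h
      · exact absurd h hnK
    have hSn : coeff n S = t j := by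
      have := hcoeffS j
      rwa [hjn] at this
    rw [hfn, hSn, zero_mul, zero_add]
    exact mul_ne_zero htj hnK
  exact aux_finrank_quot K _ (n - 1) hlowD htopD
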